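/- Let $k,f\ge 2$ be integers and $0<\gamma<1$, and set $c=\lfloor 1/\gamma\rfloor$. Choose $\beta>0$ with $(c+1)\gamma > 1 + (c+1)^2\beta$. Let $F$ be a $k$-uniform hypergraph on $f$ vertices and let $H$ be a $k$-uniform hypergraph on $n$ vertices (with $n$ sufficiently large) such that every vertex of $H$ is contained in at least $\gamma n^{f-1}$ copies of $F$. Then every set of $c+1$ vertices of $H$ contains two vertices $u,w$ such that there are at least $\beta n^{f-1}$ sets $W$ of $f-1$ vertices with both $H[\{u\}\cup W]$ and $H[\{w\}\cup W]$ containing spanning copies of $F$. -/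

import Mathlib

open Finset
open scoped Classical

/-- `S` spans a copy of the `k`-graph with edge set `EF` (on vertex type `VF`)
inside the hypergraph with edge set `E`. -/
def HasSpanningCopy {VF α : Type*} [Fintype VF] [DecidableEq α]
    (EF : Finset (Finset VF)) (E : Finset (Finset α)) (S : Finset α) : Prop :=
  ∃ φ : VF → α, Function.Injective φ ∧ Finset.image φ Finset.univ = S ∧
    ∀ e ∈ EF, e.image φ ∈ E

/-- Bonferroni-type bound: the sum of the cardinalities is at most the cardinality of the
union plus the sum over ordered pairs of cardinalities of pairwise intersections. -/
lemma sum_card_le_card_biUnion_add {α β : Type*} [DecidableEq α] [DecidableEq β]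
    (A : α → Finset β) (T : Finset α) :
    ∑ v ∈ T, (A v).card ≤
      (T.biUnion A).card + ∑ u ∈ T, ∑ w ∈ T.erase u, (A u ∩ A w).card := by
  classical
  induction T using Finset.induction_on with
  | empty => simp
  | @insert a s ha ih =>
    rw [Finset.sum_insert ha, Finset.biUnion_insert]
    have h1 : (A a).card + (s.biUnion A).card
        = (A a ∪ s.biUnion A).card + (A a ∩ s.biUnion A).card :=
      (Finset.card_union_add_card_inter _ _).symm
    have h2 : (A a ∩ s.biUnion A).card ≤ ∑ w ∈ s, (A a ∩ A w).card := by
      rw [Finset.inter_biUnion]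
      exact Finset.card_biUnion_le
    have h3 : ∑ w ∈ s, (A a ∩ A w).card + ∑ u ∈ s, ∑ w ∈ s.erase u, (A u ∩ A w).card
        ≤ ∑ u ∈ insert a s, ∑ w ∈ (insert a s).erase u, (A u ∩ A w).card := by
      rw [Finset.sum_insert ha, Finset.erase_insert ha]
      refine add_le_add (le_refl _) (Finset.sum_le_sum fun u hu => ?_)
      · have : (insert a s).erase u = insert a (s.erase u) := by
          rw [Finset.erase_insert_of_ne]
          rintro rfl; exact ha hu
        rw [this, Finset.sum_insert (by simp [ha, Finset.mem_erase])]
        exact Nat.le_add_left _ _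
    calc (A a).card + ∑ v ∈ s, (A v).card
        ≤ (A a).card + ((s.biUnion A).card + ∑ u ∈ s, ∑ w ∈ s.erase u, (A u ∩ A w).card) := by
          gcongr
      _ = ((A a).card + (s.biUnion A).card) + ∑ u ∈ s, ∑ w ∈ s.erase u, (A u ∩ A w).card := by
          ring
      _ = ((A a ∪ s.biUnion A).card + (A a ∩ s.biUnion A).card)
            + ∑ u ∈ s, ∑ w ∈ s.erase u, (A u ∩ A w).card := by rw [h1]
      _ ≤ (A a ∪ s.biUnion A).card
            + (∑ w ∈ s, (A a ∩ A w).card + ∑ u ∈ s, ∑ w ∈ s.erase u, (A u ∩ A w).card) := by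
          omega
      _ ≤ _ := by gcongr

theorem stmt1 (k f : ℕ) (hk : 2 ≤ k) (hf : 2 ≤ f)
    (γ : ℝ) (hγ0 : 0 < γ) (hγ1 : γ < 1)
    (c : ℕ) (hc : c = ⌊1 / γ⌋₊)
    (β : ℝ) (hβ : 0 < β)
    (hβγ : 1 + ((c : ℝ) + 1) ^ 2 * β < ((c : ℝ) + 1) * γ) :
    ∃ n0 : ℕ, ∀ n : ℕ, n0 ≤ n →
    ∀ (VF : Type) (_ : Fintype VF) (_ : DecidableEq VF),
    Fintype.card VF = f →
    ∀ EF : Finset (Finset VF), (∀ e ∈ EF, e.card = k) →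
    ∀ E : Finset (Finset (Fin n)), (∀ e ∈ E, e.card = k) →
    (∀ v : Fin n, γ * (n : ℝ) ^ (f - 1) ≤
      (Finset.card ((Finset.univ.powersetCard (f - 1)).filter
        (fun W : Finset (Fin n) => v ∉ W ∧ HasSpanningCopy EF E (insert v W))) : ℝ)) →
    ∀ T : Finset (Fin n), T.card = c + 1 →
    ∃ u ∈ T, ∃ w ∈ T, u ≠ w ∧
      β * (n : ℝ) ^ (f - 1) ≤
      (Finset.card ((Finset.univ.powersetCard (f - 1)).filter
        (fun W : Finset (Fin n) => u ∉ W ∧ w ∉ W ∧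
          HasSpanningCopy EF E (insert u W) ∧ HasSpanningCopy EF E (insert w W))) : ℝ) := by
  refine ⟨1, fun n hn VF _ _ hVF EF hEF E hE hdeg T hT => ?_⟩
  by_contra hcon
  push_neg at hcon
  set N : ℝ := (n : ℝ) ^ (f - 1) with hN
  have hNpos : 0 < N := by positivity
  set A : Fin n → Finset (Finset (Fin n)) := fun v =>
    (Finset.univ.powersetCard (f - 1)).filter
      (fun W : Finset (Fin n) => v ∉ W ∧ HasSpanningCopy EF E (insert v W)) with hA
  -- intersections are the pair sets
  have hinter : ∀ u w : Fin n, A u ∩ A w =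
      (Finset.univ.powersetCard (f - 1)).filter
        (fun W : Finset (Fin n) => u ∉ W ∧ w ∉ W ∧
          HasSpanningCopy EF E (insert u W) ∧ HasSpanningCopy EF E (insert w W)) := by
    intro u w
    ext W
    simp only [hA, Finset.mem_inter, Finset.mem_filter]
    tauto
  -- lower bound on the main sum
  have hlow : ((c : ℝ) + 1) * γ * N ≤ ∑ v ∈ T, ((A v).card : ℝ) := by
    calc ((c : ℝ) + 1) * γ * N = ∑ _v ∈ T, γ * N := by
          rw [Finset.sum_const, hT]; push_cast; ring
      _ ≤ ∑ v ∈ T, ((A v).card : ℝ) := Finset.sum_le_sum fun v _ => hdeg v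
  -- upper bounds
  have hU : ((T.biUnion A).card : ℝ) ≤ N := by
    have h1 : T.biUnion A ⊆ Finset.univ.powersetCard (f - 1) := by
      intro W hW
      rcases Finset.mem_biUnion.mp hW with ⟨v, _, hv⟩
      exact (Finset.mem_filter.mp hv).1
    have h2 : (T.biUnion A).card ≤ n ^ (f - 1) := by
      calc (T.biUnion A).card ≤ (Finset.univ.powersetCard (f - 1) :
              Finset (Finset (Fin n))).card := Finset.card_le_card h1
        _ = n.choose (f - 1) := by rw [Finset.card_powersetCard, Finset.card_univ,
              Fintype.card_fin]
        _ ≤ n ^ (f - 1) := Nat.choose_le_pow n (f - 1)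
    calc ((T.biUnion A).card : ℝ) ≤ ((n ^ (f - 1) : ℕ) : ℝ) := by exact_mod_cast h2
      _ = N := by push_cast; rfl
  have hP : ∑ u ∈ T, ∑ w ∈ T.erase u, ((A u ∩ A w).card : ℝ)
      ≤ ((c : ℝ) + 1) ^ 2 * (β * N) := by
    have hterm : ∀ u ∈ T, ∀ w ∈ T.erase u, ((A u ∩ A w).card : ℝ) ≤ β * N := by
      intro u hu w hw
      have hwT : w ∈ T := Finset.mem_of_mem_erase hw
      have hne : u ≠ w := fun h => (Finset.ne_of_mem_erase hw) h.symm
      have := hcon u hu w hwT hne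
      rw [hinter u w]
      exact le_of_lt this
    calc ∑ u ∈ T, ∑ w ∈ T.erase u, ((A u ∩ A w).card : ℝ)
        ≤ ∑ u ∈ T, ∑ _w ∈ T.erase u, (β * N) := by
          refine Finset.sum_le_sum fun u hu => Finset.sum_le_sum fun w hw => ?_
          exact hterm u hu w hw
      _ = ∑ u ∈ T, ((T.erase u).card : ℝ) * (β * N) := by
          simp [Finset.sum_const, nsmul_eq_mul]
      _ ≤ ∑ _u ∈ T, ((c : ℝ) + 1) * (β * N) := by
          refine Finset.sum_le_sum fun u hu => ?_
          have hle : (T.erase u).card ≤ c + 1 := by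
            calc (T.erase u).card ≤ T.card := Finset.card_erase_le
              _ = c + 1 := hT
          have : ((T.erase u).card : ℝ) ≤ (c : ℝ) + 1 := by exact_mod_cast hle
          have hβN : 0 ≤ β * N := le_of_lt (mul_pos hβ hNpos)
          exact mul_le_mul_of_nonneg_right this hβN
      _ = ((c : ℝ) + 1) ^ 2 * (β * N) := by
          rw [Finset.sum_const, hT]; push_cast; ring
  -- combine
  have hkey : ∑ v ∈ T, ((A v).card : ℝ)
      ≤ ((T.biUnion A).card : ℝ) + ∑ u ∈ T, ∑ w ∈ T.erase u, ((A u ∩ A w).card : ℝ) := by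
    have := sum_card_le_card_biUnion_add A T
    exact_mod_cast this
  have : ((c : ℝ) + 1) * γ * N ≤ N + ((c : ℝ) + 1) ^ 2 * (β * N) := by
    calc ((c : ℝ) + 1) * γ * N ≤ ∑ v ∈ T, ((A v).card : ℝ) := hlow
      _ ≤ ((T.biUnion A).card : ℝ) + ∑ u ∈ T, ∑ w ∈ T.erase u, ((A u ∩ A w).card : ℝ) := hkey
      _ ≤ N + ((c : ℝ) + 1) ^ 2 * (β * N) := add_le_add hU hP
  have hcontra : ((c : ℝ) + 1) * γ * N < ((c : ℝ) + 1) * γ * N := by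
    calc ((c : ℝ) + 1) * γ * N ≤ N + ((c : ℝ) + 1) ^ 2 * (β * N) := this
      _ = (1 + ((c : ℝ) + 1) ^ 2 * β) * N := by ring
      _ < (((c : ℝ) + 1) * γ) * N := by
          exact mul_lt_mul_of_pos_right hβγ hNpos
      _ = ((c : ℝ) + 1) * γ * N := by ring
  exact lt_irrefl _ hcontra
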